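/- Define V4-integrand-term W(d, r) = ∫_{r}^{d} sat((τ - r)/k3) dτ for k3 > 0. Then W(d, r) ≥ 0 for all real d, r, W(d, r) = 0 if and only if d = r, and W(d, r) ≥ |d - r| - k3/2 (hence W(d, r) → ∞ as |d - r| → ∞). -/

import Mathlib

noncomputable def sat (η : ℝ) : ℝ := if |η| < 1 then η else Real.sign η

noncomputable def W (k3 d r : ℝ) : ℝ := ∫ τ in r..d, sat ((τ - r) / k3)

lemma sat_eq (η : ℝ) : sat η = max (-1) (min η 1) := by
  unfold sat
  by_cases h : |η| < 1
  · obtain ⟨h1, h2⟩ := abs_lt.mp h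
    rw [if_pos h, min_eq_left h2.le, max_eq_right h1.le]
  · rw [if_neg h]
    push_neg at h
    rcases le_abs.mp h with hη | hη
    · rw [Real.sign_of_pos (by linarith), min_eq_right hη,
        max_eq_right (by linarith : (-1:ℝ) ≤ 1)]
    · rw [Real.sign_of_neg (by linarith), min_eq_left (by linarith),
        max_eq_left (by linarith)]

lemma sat_neg (η : ℝ) : sat (-η) = - sat η := by
  unfold sat
  rw [abs_neg, Real.sign_neg]
  split_ifs <;> ring

lemma sat_continuous : Continuous sat := by
  have : sat = fun η => max (-1) (min η 1) := funext sat_eq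
  rw [this]; fun_prop

theorem W_properties (k3 : ℝ) (hk3 : 0 < k3) :
    (∀ d r : ℝ, 0 ≤ W k3 d r) ∧
    (∀ d r : ℝ, W k3 d r = 0 ↔ d = r) ∧
    (∀ d r : ℝ, |d - r| - k3 / 2 ≤ W k3 d r) := by
  have hcont : Continuous fun u : ℝ => sat (u / k3) :=
    sat_continuous.comp (by fun_prop)
  -- W as integral from 0
  have hW0 : ∀ d r : ℝ, W k3 d r = ∫ u in (0:ℝ)..(d - r), sat (u / k3) := by
    intro d r
    have := intervalIntegral.integral_comp_sub_right (a := r) (b := d)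
      (fun u => sat (u / k3)) r
    simpa [W] using this
  -- symmetry
  have hsymm : ∀ L : ℝ, (∫ u in (0:ℝ)..(-L), sat (u / k3))
      = ∫ u in (0:ℝ)..L, sat (u / k3) := by
    intro L
    have h1 : (∫ u in (0:ℝ)..(-L), sat (u / k3))
        = - ∫ u in (-L)..(0:ℝ), sat (u / k3) :=
      (intervalIntegral.integral_symm _ _)
    have h2 : (∫ u in (-L)..(0:ℝ), sat (u / k3))
        = ∫ u in (-L)..(0:ℝ), - sat ((-u) / k3) := by
      apply intervalIntegral.integral_congr
      intro u _
      show sat (u / k3) = -sat (-u / k3)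
      rw [neg_div, sat_neg, neg_neg]
    have h3 : (∫ u in (-L)..(0:ℝ), sat ((-u) / k3))
        = ∫ u in (0:ℝ)..L, sat (u / k3) := by
      have := intervalIntegral.integral_comp_neg (a := -L) (b := 0)
        (fun u => sat (u / k3))
      simpa using this
    rw [h1, h2, intervalIntegral.integral_neg, h3, neg_neg]
  have hWabs : ∀ d r : ℝ, W k3 d r = ∫ u in (0:ℝ)..|d - r|, sat (u / k3) := by
    intro d r
    rcases le_or_gt r d with h | h
    · rw [hW0, abs_of_nonneg (by linarith)]
    · rw [hW0, abs_of_neg (by linarith)]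
      exact (hsymm (d - r)).symm
  -- nonneg of integrand for u ≥ 0
  have hsat_nonneg : ∀ u : ℝ, 0 ≤ u → 0 ≤ sat (u / k3) := by
    intro u hu
    rw [sat_eq]
    have : (0:ℝ) ≤ min (u / k3) 1 := le_min (div_nonneg hu hk3.le) one_pos.le
    exact le_trans this (le_max_right _ _)
  have hF0 : ∀ L : ℝ, 0 ≤ L → 0 ≤ ∫ u in (0:ℝ)..L, sat (u / k3) := by
    intro L hL
    apply intervalIntegral.integral_nonneg hL
    intro u hu
    exact hsat_nonneg u hu.1
  -- strict positivity
  have hFpos : ∀ L : ℝ, 0 < L → 0 < ∫ u in (0:ℝ)..L, sat (u / k3) := by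
    intro L hL
    apply intervalIntegral.intervalIntegral_pos_of_pos_on
      (hcont.intervalIntegrable 0 L)
    · intro u hu
      rw [sat_eq]
      have h1 : 0 < min (u / k3) 1 := lt_min (div_pos hu.1 hk3) one_pos
      exact lt_of_lt_of_le h1 (le_max_right _ _)
    · exact hL
  -- exact value on [0, k3]
  have hFsmall : ∀ L : ℝ, 0 ≤ L → L ≤ k3 →
      (∫ u in (0:ℝ)..L, sat (u / k3)) = L ^ 2 / (2 * k3) := by
    intro L hL hLk
    have hcongr : (∫ u in (0:ℝ)..L, sat (u / k3)) = ∫ u in (0:ℝ)..L, u / k3 := by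
      apply intervalIntegral.integral_congr
      intro u hu
      rw [Set.uIcc_of_le hL] at hu
      show sat (u / k3) = u / k3
      have h1 : u / k3 ≤ 1 := (div_le_one hk3).mpr (le_trans hu.2 hLk)
      have h2 : (0:ℝ) ≤ u / k3 := div_nonneg hu.1 hk3.le
      rw [sat_eq, min_eq_left h1, max_eq_right (by linarith)]
    rw [hcongr, intervalIntegral.integral_div, integral_id]
    ring
  -- value 1 for u ≥ k3
  have hsat_one : ∀ u : ℝ, k3 ≤ u → sat (u / k3) = 1 := by
    intro u hu
    have h1 : (1:ℝ) ≤ u / k3 := (one_le_div hk3).mpr hu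
    rw [sat_eq, min_eq_right h1, max_eq_right (by linarith)]
  -- lower bound
  have hFlb : ∀ L : ℝ, 0 ≤ L → L - k3 / 2 ≤ ∫ u in (0:ℝ)..L, sat (u / k3) := by
    intro L hL
    rcases le_or_gt L k3 with h | h
    · rw [hFsmall L hL h, ← sub_nonneg, div_sub' (by positivity)]
      apply div_nonneg _ (by positivity)
      nlinarith [sq_nonneg (L - k3)]
    · have hsplit : (∫ u in (0:ℝ)..k3, sat (u / k3))
          + (∫ u in k3..L, sat (u / k3)) = ∫ u in (0:ℝ)..L, sat (u / k3) :=
        intervalIntegral.integral_add_adjacent_intervals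
          (hcont.intervalIntegrable 0 k3) (hcont.intervalIntegrable k3 L)
      have htail : (∫ u in k3..L, sat (u / k3)) = L - k3 := by
        have : (∫ u in k3..L, sat (u / k3)) = ∫ u in k3..L, (1:ℝ) := by
          apply intervalIntegral.integral_congr
          intro u hu
          rw [Set.uIcc_of_le h.le] at hu
          exact hsat_one u hu.1
        rw [this]; simp
      have hhead := hFsmall k3 hk3.le le_rfl
      rw [← hsplit, htail, hhead]
      have : k3 ^ 2 / (2 * k3) = k3 / 2 := by
        field_simp
      rw [this]
      linarith
  refine ⟨fun d r => ?_, fun d r => ⟨fun h => ?_, fun h => ?_⟩, fun d r => ?_⟩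
  · rw [hWabs]; exact hF0 _ (abs_nonneg _)
  · by_contra hdr
    have habs : 0 < |d - r| := abs_pos.mpr (sub_ne_zero.mpr hdr)
    have := hFpos _ habs
    rw [← hWabs] at this
    exact absurd h (ne_of_gt this)
  · subst h; unfold W; simp
  · rw [hWabs]; exact hFlb _ (abs_nonneg _)
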